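/- Let n ≥ 3 and k ≥ 2 be natural numbers. The function g(t) = ∑_{i=1}^{k-1} (n-1)^i (1/(2i-1) + 2/n) t^{i-1} - (n-2)/(n·t) is strictly increasing on (0,∞), tends to -∞ as t → 0⁺ and to +∞ as t → ∞ (for k ≥ 2 it is positive for large t), and hence has a unique positive root. -/

import Mathlib

open Filter Topology

theorem weight_function_unique_root (n k : ℕ) (hn : 3 ≤ n) (hk : 2 ≤ k)
    (g : ℝ → ℝ)
    (hg : g = fun t : ℝ => (∑ i ∈ Finset.Icc 1 (k - 1),
      ((n : ℝ) - 1) ^ i * (1 / (2 * i - 1) + 2 / n) * t ^ (i - 1)) -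
      ((n : ℝ) - 2) / (n * t)) :
    StrictMonoOn g (Set.Ioi 0) ∧
    Tendsto g (nhdsWithin 0 (Set.Ioi 0)) atBot ∧
    (∀ᶠ t in atTop, 0 < g t) ∧
    ∃! t : ℝ, 0 < t ∧ g t = 0 := by
  have hn3 : (3 : ℝ) ≤ n := by exact_mod_cast hn
  have hnpos : (0 : ℝ) < n := by linarith
  have hn2 : (0 : ℝ) < (n : ℝ) - 2 := by linarith
  have hn1 : (0 : ℝ) < (n : ℝ) - 1 := by linarith
  -- coefficient nonnegativity
  have hcoef : ∀ i ∈ Finset.Icc 1 (k - 1),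
      0 ≤ ((n : ℝ) - 1) ^ i * (1 / (2 * (i : ℝ) - 1) + 2 / n) := by
    intro i hi
    have hi1 : 1 ≤ i := (Finset.mem_Icc.mp hi).1
    have : (1 : ℝ) ≤ i := by exact_mod_cast hi1
    have h2i : (1 : ℝ) ≤ 2 * (i : ℝ) - 1 := by linarith
    have : (0 : ℝ) ≤ 1 / (2 * (i : ℝ) - 1) := by positivity
    have : (0 : ℝ) ≤ 2 / n := by positivity
    positivity
  -- strict monotonicity
  have hmono : StrictMonoOn g (Set.Ioi 0) := by
    intro a ha b hb hab
    have ha' : 0 < a := ha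
    have hb' : 0 < b := hb
    simp only [hg]
    have hsum : (∑ i ∈ Finset.Icc 1 (k - 1),
        ((n : ℝ) - 1) ^ i * (1 / (2 * i - 1) + 2 / n) * a ^ (i - 1)) ≤
        (∑ i ∈ Finset.Icc 1 (k - 1),
        ((n : ℝ) - 1) ^ i * (1 / (2 * i - 1) + 2 / n) * b ^ (i - 1)) := by
      apply Finset.sum_le_sum
      intro i hi
      have hpow : a ^ (i - 1) ≤ b ^ (i - 1) := pow_le_pow_left₀ ha'.le hab.le _
      exact mul_le_mul_of_nonneg_left hpow (hcoef i hi)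
    have hdiv : ((n : ℝ) - 2) / (n * b) < ((n : ℝ) - 2) / (n * a) := by
      apply div_lt_div_of_pos_left hn2 (by positivity)
      exact (mul_lt_mul_iff_right₀ hnpos).mpr hab
    linarith
  -- tendsto atBot at 0⁺
  have hbot : Tendsto g (nhdsWithin 0 (Set.Ioi 0)) atBot := by
    rw [hg]
    have h1 : Tendsto (fun t : ℝ => ∑ i ∈ Finset.Icc 1 (k - 1),
        ((n : ℝ) - 1) ^ i * (1 / (2 * i - 1) + 2 / n) * t ^ (i - 1))
        (nhdsWithin 0 (Set.Ioi 0))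
        (𝓝 (∑ i ∈ Finset.Icc 1 (k - 1),
        ((n : ℝ) - 1) ^ i * (1 / (2 * i - 1) + 2 / n) * (0:ℝ) ^ (i - 1))) := by
      apply Tendsto.mono_left _ nhdsWithin_le_nhds
      exact Continuous.tendsto (continuous_finset_sum _ fun i _ =>
        continuous_const.mul (continuous_pow _)) 0
    have h2 : Tendsto (fun t : ℝ => (n : ℝ) * t) (nhdsWithin 0 (Set.Ioi 0))
        (nhdsWithin 0 (Set.Ioi 0)) := by
      apply tendsto_nhdsWithin_of_tendsto_nhds_of_eventually_within
      · have := (continuous_const.mul continuous_id : Continuous fun t : ℝ => (n:ℝ)*t)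
        convert (this.tendsto 0).mono_left nhdsWithin_le_nhds using 2 <;> simp [Pi.mul_apply]
      · filter_upwards [self_mem_nhdsWithin] with t ht
        exact mul_pos hnpos ht
    have h3 : Tendsto (fun t : ℝ => ((n : ℝ) * t)⁻¹) (nhdsWithin 0 (Set.Ioi 0)) atTop :=
      tendsto_inv_nhdsGT_zero.comp h2
    have h4 : Tendsto (fun t : ℝ => ((n : ℝ) - 2) / ((n : ℝ) * t))
        (nhdsWithin 0 (Set.Ioi 0)) atTop := by
      simp only [div_eq_mul_inv]
      exact Tendsto.const_mul_atTop hn2 h3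
    have h5 : Tendsto (fun t : ℝ => -(((n : ℝ) - 2) / ((n : ℝ) * t)))
        (nhdsWithin 0 (Set.Ioi 0)) atBot := tendsto_neg_atTop_atBot.comp h4
    -- combine: sum tends to a limit, subtrahend tends to atTop
    have hcomb : Tendsto (fun t : ℝ => (∑ i ∈ Finset.Icc 1 (k - 1),
        ((n : ℝ) - 1) ^ i * (1 / (2 * i - 1) + 2 / n) * t ^ (i - 1)) -
        ((n : ℝ) - 2) / ((n : ℝ) * t)) (nhdsWithin 0 (Set.Ioi 0)) atBot := by
      have := Filter.Tendsto.add_atBot h1 h5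
      simpa [sub_eq_add_neg] using this
    exact hcomb
  -- positivity for t ≥ 1
  have hpos : ∀ t : ℝ, 1 ≤ t → 0 < g t := by
    intro t ht
    have htpos : (0 : ℝ) < t := by linarith
    rw [hg]
    have h1mem : 1 ∈ Finset.Icc 1 (k - 1) := by
      simp [Finset.mem_Icc]; omega
    have hsum_ge : ((n : ℝ) - 1) ^ 1 * (1 / (2 * (1:ℕ) - 1) + 2 / n) * t ^ (1 - 1) ≤
        ∑ i ∈ Finset.Icc 1 (k - 1),
        ((n : ℝ) - 1) ^ i * (1 / (2 * i - 1) + 2 / n) * t ^ (i - 1) := by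
      apply Finset.single_le_sum (f := fun i : ℕ => ((n : ℝ) - 1) ^ i * (1 / (2 * (i:ℝ) - 1) + 2 / n) * t ^ (i - 1)) _ h1mem
      intro i hi
      have := hcoef i hi
      positivity
    have hterm : ((n : ℝ) - 1) ^ 1 * (1 / (2 * (1:ℕ) - 1) + 2 / n) * t ^ (1 - 1)
        = ((n : ℝ) - 1) * (1 + 2 / n) := by
      norm_num
    have hdiv_le : ((n : ℝ) - 2) / (n * t) ≤ ((n : ℝ) - 2) / n := by
      apply div_le_div_of_nonneg_left hn2.le hnpos
      nlinarith
    have hdivlt : ((n : ℝ) - 2) / n < 1 := by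
      rw [div_lt_one hnpos]; linarith
    have hge2 : (2 : ℝ) ≤ ((n : ℝ) - 1) * (1 + 2 / n) := by
      have h2n : (0:ℝ) < 2/n := by positivity
      nlinarith
    rw [hterm] at hsum_ge
    simp only
    linarith
  refine ⟨hmono, hbot, ?_, ?_⟩
  · filter_upwards [eventually_ge_atTop (1:ℝ)] with t ht using hpos t ht
  · -- existence of a root via IVT
    have hneg : ∀ᶠ t in nhdsWithin 0 (Set.Ioi 0), g t < 0 :=
      hbot.eventually (eventually_lt_atBot 0)
    have hlt1 : ∀ᶠ t in nhdsWithin (0:ℝ) (Set.Ioi 0), t < 1 :=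
      Filter.Eventually.filter_mono nhdsWithin_le_nhds (gt_mem_nhds (by norm_num : (0:ℝ) < 1))
    obtain ⟨t0, ht0neg, ht0lt1, ht0mem⟩ :=
      (hneg.and (hlt1.and self_mem_nhdsWithin)).exists
    have ht0pos : (0:ℝ) < t0 := ht0mem
    have hcont : ContinuousOn g (Set.Icc t0 1) := by
      rw [hg]
      apply ContinuousOn.sub
      · exact Continuous.continuousOn <| continuous_finset_sum _ fun i _ =>
          continuous_const.mul (continuous_pow _)
      · apply ContinuousOn.div continuousOn_const (by fun_prop)
        intro x hx
        have : 0 < x := lt_of_lt_of_le ht0pos hx.1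
        positivity
    have hg1 : 0 < g 1 := hpos 1 le_rfl
    obtain ⟨t, ht, hroot⟩ := intermediate_value_Icc ht0lt1.le hcont
      ⟨ht0neg.le, hg1.le⟩
    have htpos : 0 < t := lt_of_lt_of_le ht0pos ht.1
    refine ⟨t, ⟨htpos, hroot⟩, ?_⟩
    intro y ⟨hypos, hy0⟩
    exact hmono.injOn hypos htpos (by rw [hy0, hroot])
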